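/- arXiv:2306.12426 — 4 statements merged into one kernel-verified Lean document; each statement's English description precedes it below -/
import Mathlib

section
/- For every natural number n ≥ 6 there exist at least two BCK-algebras of order n (i.e., two BCK-algebra structures on an n-element set that are not isomorphic as BCK-algebras) each of which contains elements x, y whose BCK-sequences cannot be prolonged. -/
/-- A BCK-algebra structure on a set `X`: a binary operation `op` and a
constant `zero` satisfying the five BCK axioms. -/
structure BCK (X : Type*) where
  op : X → X → X
  zero : X
  ax1 : ∀ x y z : X, op (op (op x y) (op z y)) (op x z) = zero
  ax2 : ∀ x y : X, op (op x (op x y)) y = zero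
  ax3 : ∀ x : X, op x zero = x
  ax4 : ∀ x : X, op zero x = zero
  ax5 : ∀ x y : X, op x y = zero → op y x = zero → x = y

/-- The pair of BCK-sequences `(x_k, y_k)` determined by starting elements
`x, y`:  `x_0 = x`, `y_0 = y`, `x_1 = y·(y·x)`, `y_1 = x·(x·y)`, and
`x_k = x_{k-2}·(x_{k-2}·x_{k-1})`, `y_k = y_{k-2}·(y_{k-2}·y_{k-1})` for `k ≥ 2`. -/
def bckPair {X : Type*} (op : X → X → X) (x y : X) : ℕ → X × X
  | 0 => (x, y)
  | 1 => (op y (op y x), op x (op x y))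
  | k + 2 =>
      (op (bckPair op x y k).1 (op (bckPair op x y k).1 (bckPair op x y (k + 1)).1),
       op (bckPair op x y k).2 (op (bckPair op x y k).2 (bckPair op x y (k + 1)).2))

/-- The BCK-sequences of `x` and `y` cannot be prolonged: it fails that
`x_{k+1} ≤ y_k` and `y_{k+1} ≤ x_k` hold for every `k ≥ 0` (where `a ≤ b`
is the BCK-order, i.e. `a·b = 0`). -/
def cannotProlong {X : Type*} (A : BCK X) (x y : X) : Prop :=
  ¬ (∀ k : ℕ, A.op (bckPair A.op x y (k + 1)).1 (bckPair A.op x y k).2 = A.zero ∧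
      A.op (bckPair A.op x y (k + 1)).2 (bckPair A.op x y k).1 = A.zero)

/- ================= auxiliary development ================= -/

/-- Extension of a 6×6 table to arbitrary naturals: elements `≥ 6` behave
like pairwise incomparable atoms. -/
def fop (t : ℕ → ℕ → ℕ) (a b : ℕ) : ℕ :=
  if a = b then 0 else if 6 ≤ a ∨ 6 ≤ b then a else t a b

/-- A good 6×6 BCK table. -/
structure GoodTable (t : ℕ → ℕ → ℕ) : Prop where
  cl : ∀ a < 6, ∀ b < 6, t a b < 6
  diag : ∀ a < 6, t a a = 0
  zr : ∀ a < 6, t a 0 = a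
  zl : ∀ b < 6, t 0 b = 0
  a1 : ∀ a < 6, ∀ b < 6, ∀ c < 6, t (t (t a b) (t c b)) (t a c) = 0
  a2 : ∀ a < 6, ∀ b < 6, t (t a (t a b)) b = 0
  tle : ∀ a < 6, ∀ b < 6, t (t a b) a = 0
  a5 : ∀ a < 6, ∀ b < 6, t a b = 0 → t b a = 0 → a = b

section tab

variable {t : ℕ → ℕ → ℕ}

lemma fop_self (t : ℕ → ℕ → ℕ) (a : ℕ) : fop t a a = 0 := by
  simp [fop]

lemma fop_of_ne {a b : ℕ} (hab : a ≠ b) (h6 : 6 ≤ a ∨ 6 ≤ b) : fop t a b = a := by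
  unfold fop; rw [if_neg hab, if_pos h6]

lemma fop_base (H : GoodTable t) {a b : ℕ} (ha : a < 6) (hb : b < 6) :
    fop t a b = t a b := by
  by_cases hab : a = b
  · subst hab; rw [fop_self, H.diag a ha]
  · unfold fop; rw [if_neg hab, if_neg (by omega)]

lemma fop_zero_right (H : GoodTable t) (a : ℕ) : fop t a 0 = a := by
  by_cases h0 : a = 0
  · subst h0; exact fop_self t 0
  · by_cases h6 : 6 ≤ a
    · exact fop_of_ne h0 (Or.inl h6)
    · rw [fop_base H (by omega) (by omega)]; exact H.zr a (by omega)

lemma fop_zero_left (H : GoodTable t) (b : ℕ) : fop t 0 b = 0 := by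
  by_cases h0 : b = 0
  · subst h0; exact fop_self t 0
  · by_cases h6 : 6 ≤ b
    · exact fop_of_ne (by omega) (Or.inr h6)
    · rw [fop_base H (by omega) (by omega)]; exact H.zl b (by omega)

lemma Fax2 (H : GoodTable t) (a b : ℕ) : fop t (fop t a (fop t a b)) b = 0 := by
  by_cases hab : a = b
  · subst hab; rw [fop_self, fop_zero_right H, fop_self]
  · by_cases h6 : 6 ≤ a ∨ 6 ≤ b
    · rw [fop_of_ne hab h6, fop_self, fop_zero_left H]
    · push_neg at h6
      obtain ⟨ha, hb⟩ := h6
      rw [fop_base H ha hb, fop_base H ha (H.cl a ha b hb),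
        fop_base H (H.cl a ha _ (H.cl a ha b hb)) hb]
      exact H.a2 a ha b hb

lemma Fax1 (H : GoodTable t) (a b c : ℕ) :
    fop t (fop t (fop t a b) (fop t c b)) (fop t a c) = 0 := by
  by_cases hab : a = b
  · subst hab
    rw [fop_self]
    simp only [fop_zero_left H]
  · by_cases h6a : 6 ≤ a
    · have hu : fop t a b = a := fop_of_ne hab (Or.inl h6a)
      rw [hu]
      by_cases hca : c = a
      · subst hca
        rw [hu]
        simp only [fop_self, fop_zero_left H]
      · have hw : fop t a c = a := fop_of_ne (fun h => hca h.symm) (Or.inl h6a)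
        rw [hw]
        by_cases hv : a = fop t c b
        · rw [← hv, fop_self, fop_zero_left H]
        · rw [fop_of_ne hv (Or.inl h6a), fop_self]
    · by_cases h6b : 6 ≤ b
      · have hu : fop t a b = a := fop_of_ne hab (Or.inr h6b)
        rw [hu]
        by_cases hcb : c = b
        · subst hcb
          rw [fop_self, fop_zero_right H, hu]
          exact fop_self t a
        · rw [fop_of_ne hcb (Or.inr h6b)]
          exact fop_self t _
      · have ha : a < 6 := by omega
        have hb : b < 6 := by omega
        rw [fop_base H ha hb]
        have hu6 : t a b < 6 := H.cl a ha b hb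
        by_cases h6c : 6 ≤ c
        · rw [fop_of_ne (by omega : c ≠ b) (Or.inl h6c),
            fop_of_ne (by omega : t a b ≠ c) (Or.inr h6c),
            fop_of_ne (by omega : a ≠ c) (Or.inr h6c),
            fop_base H hu6 ha]
          exact H.tle a ha b hb
        · have hc : c < 6 := by omega
          rw [fop_base H hc hb, fop_base H ha hc,
            fop_base H hu6 (H.cl c hc b hb),
            fop_base H (H.cl _ hu6 _ (H.cl c hc b hb)) (H.cl a ha c hc)]
          exact H.a1 a ha b hb c hc

lemma Fax5 (H : GoodTable t) (a b : ℕ) (h1 : fop t a b = 0) (h2 : fop t b a = 0) :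
    a = b := by
  by_cases hab : a = b
  · exact hab
  · exfalso
    by_cases h6 : 6 ≤ a ∨ 6 ≤ b
    · rw [fop_of_ne hab h6] at h1
      subst h1
      rw [fop_of_ne (by omega : b ≠ 0) (Or.inl (by omega : 6 ≤ b))] at h2
      omega
    · push_neg at h6
      obtain ⟨ha, hb⟩ := h6
      rw [fop_base H ha hb] at h1
      rw [fop_base H hb ha] at h2
      exact hab (H.a5 a ha b hb h1 h2)

lemma fop_lt (H : GoodTable t) {n : ℕ} (hn : 6 ≤ n) {a : ℕ} (b : ℕ) (ha : a < n) :
    fop t a b < n := by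
  by_cases hab : a = b
  · rw [hab, fop_self]; omega
  · by_cases h6 : 6 ≤ a ∨ 6 ≤ b
    · rw [fop_of_ne hab h6]; exact ha
    · push_neg at h6
      obtain ⟨ha6, hb6⟩ := h6
      rw [fop_base H ha6 hb6]
      have := H.cl a ha6 b hb6
      omega

/-- The extended operation on `Fin n`. -/
def mkOp (t : ℕ → ℕ → ℕ) {n : ℕ} (x y : Fin n) : Fin n :=
  ⟨fop t x.val y.val % n, Nat.mod_lt _ (Nat.lt_of_le_of_lt (Nat.zero_le _) x.isLt)⟩

lemma mkOp_val (H : GoodTable t) {n : ℕ} (hn : 6 ≤ n) (x y : Fin n) :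
    (mkOp t x y).val = fop t x.val y.val :=
  Nat.mod_eq_of_lt (fop_lt H hn _ x.isLt)

/-- The extended BCK algebra on `Fin n`. -/
def mkBCK (t : ℕ → ℕ → ℕ) (n : ℕ) (hn : 6 ≤ n) (H : GoodTable t) : BCK (Fin n) where
  op := mkOp t
  zero := ⟨0, by omega⟩
  ax1 := fun x y z => by
    apply Fin.ext
    simp only [mkOp_val H hn]
    exact Fax1 H x.val y.val z.val
  ax2 := fun x y => by
    apply Fin.ext
    simp only [mkOp_val H hn]
    exact Fax2 H x.val y.val
  ax3 := fun x => by
    apply Fin.ext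
    rw [mkOp_val H hn]
    exact fop_zero_right H x.val
  ax4 := fun x => by
    apply Fin.ext
    rw [mkOp_val H hn]
    exact fop_zero_left H x.val
  ax5 := fun x y h1 h2 => by
    apply Fin.ext
    have h1' := congrArg Fin.val h1
    have h2' := congrArg Fin.val h2
    rw [mkOp_val H hn] at h1' h2'
    exact Fax5 H x.val y.val h1' h2'

lemma bckPair_fst {X : Type*} (op : X → X → X) (x y : X) (k : ℕ) :
    (bckPair op x y (k + 2)).1 =
      op (bckPair op x y k).1 (op (bckPair op x y k).1 (bckPair op x y (k + 1)).1) := rfl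

lemma bckPair_snd {X : Type*} (op : X → X → X) (x y : X) (k : ℕ) :
    (bckPair op x y (k + 2)).2 =
      op (bckPair op x y k).2 (op (bckPair op x y k).2 (bckPair op x y (k + 1)).2) := rfl

end tab

/-- First table (atoms of the sentence-invariant: `{3,5}`). -/
def tA (a b : ℕ) : ℕ :=
  (([[0,0,0,0,0,0],[1,0,0,0,0,0],[2,2,0,0,0,0],
     [3,2,1,0,1,1],[4,4,4,4,0,0],[5,4,4,4,1,0]].getD a []).getD b 0)

/-- Second table (atoms of the sentence-invariant: `{2,3,4,5}`). -/
def tB (a b : ℕ) : ℕ :=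
  (([[0,0,0,0,0,0],[1,0,0,0,0,0],[2,1,0,0,0,0],
     [3,1,1,0,0,0],[4,2,1,1,0,1],[5,3,2,1,1,0]].getD a []).getD b 0)

lemma goodA : GoodTable tA :=
  ⟨by decide, by decide, by decide, by decide, by decide, by decide, by decide, by decide⟩

lemma goodB : GoodTable tB :=
  ⟨by decide, by decide, by decide, by decide, by decide, by decide, by decide, by decide⟩

lemma keyA_nat : ∀ a, a < 6 → ∀ b, b < 6 → tA a b ≠ 0 → tA a b ≠ a → a = 3 ∨ a = 5 := by
  decide

/-- For every `n ≥ 6` there exist at least two BCK-algebras of order `n`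
(two BCK-algebra structures on an `n`-element set that are not isomorphic as
BCK-algebras) each of which contains elements `x, y` whose BCK-sequences
cannot be prolonged. -/
theorem two_nonisomorphic_BCK_with_nonprolongable_sequences
    (n : ℕ) (hn : 6 ≤ n) :
    ∃ A B : BCK (Fin n),
      (¬ ∃ φ : Fin n ≃ Fin n, ∀ x y : Fin n, φ (A.op x y) = B.op (φ x) (φ y)) ∧
      (∃ x y : Fin n, cannotProlong A x y) ∧
      (∃ x y : Fin n, cannotProlong B x y) := by
  obtain ⟨c0, hc0⟩ : ∃ u : Fin n, u.val = 0 := ⟨⟨0, by omega⟩, rfl⟩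
  obtain ⟨c1, hc1⟩ : ∃ u : Fin n, u.val = 1 := ⟨⟨1, by omega⟩, rfl⟩
  obtain ⟨c2, hc2⟩ : ∃ u : Fin n, u.val = 2 := ⟨⟨2, by omega⟩, rfl⟩
  obtain ⟨c3, hc3⟩ : ∃ u : Fin n, u.val = 3 := ⟨⟨3, by omega⟩, rfl⟩
  obtain ⟨c4, hc4⟩ : ∃ u : Fin n, u.val = 4 := ⟨⟨4, by omega⟩, rfl⟩
  obtain ⟨c5, hc5⟩ : ∃ u : Fin n, u.val = 5 := ⟨⟨5, by omega⟩, rfl⟩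
  have opa : (mkBCK tA n hn goodA).op = mkOp tA := rfl
  have opb : (mkBCK tB n hn goodB).op = mkOp tB := rfl
  have za : (mkBCK tA n hn goodA).zero = c0 := Fin.ext (by rw [hc0]; rfl)
  have zb : (mkBCK tB n hn goodB).zero = c0 := Fin.ext (by rw [hc0]; rfl)
  refine ⟨mkBCK tA n hn goodA, mkBCK tB n hn goodB, ?_, ?_, ?_⟩
  · -- non-isomorphic
    rintro ⟨φ, hφ⟩
    simp only [opa, opb, za, zb] at hφ
    -- φ maps 0 to 0
    have hz : φ c0 = c0 := by
      have h00 : mkOp tA c0 c0 = c0 := by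
        apply Fin.ext
        rw [mkOp_val goodA hn, hc0, fop_self]
      have := hφ c0 c0
      rw [h00] at this
      have h00' : mkOp tB (φ c0) (φ c0) = c0 := by
        apply Fin.ext
        rw [mkOp_val goodB hn, fop_self, hc0]
      rw [h00'] at this
      exact this
    -- the key property in A forces value 3 or 5
    have keyA : ∀ x w : Fin n, mkOp tA x w ≠ c0 → mkOp tA x w ≠ x →
        x.val = 3 ∨ x.val = 5 := by
      intro x w h1 h2
      have hval : (mkOp tA x w).val = fop tA x.val w.val := mkOp_val goodA hn x w
      by_cases hxw : x.val = w.val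
      · exfalso
        apply h1
        apply Fin.ext
        rw [hval, hxw, fop_self, hc0]
      · by_cases h6 : 6 ≤ x.val ∨ 6 ≤ w.val
        · exfalso
          apply h2
          apply Fin.ext
          rw [hval]
          exact fop_of_ne hxw h6
        · push_neg at h6
          obtain ⟨hx6, hw6⟩ := h6
          have hne0 : fop tA x.val w.val ≠ 0 := by
            intro e
            exact h1 (Fin.ext (by rw [hval, e, hc0]))
          have hnex : fop tA x.val w.val ≠ x.val := by
            intro e
            exact h2 (Fin.ext (by rw [hval, e]))
          rw [fop_base goodA hx6 hw6] at hne0 hnex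
          exact keyA_nat x.val hx6 w.val hw6 hne0 hnex
    -- witnesses of the key property in B
    have PB : ∀ u : Fin n, u.val = 2 ∨ u.val = 3 ∨ u.val = 4 →
        mkOp tB u c1 ≠ c0 ∧ mkOp tB u c1 ≠ u := by
      intro u hu
      have hval : (mkOp tB u c1).val = fop tB u.val 1 := by
        rw [mkOp_val goodB hn, hc1]
      constructor
      · intro e
        have := congrArg Fin.val e
        rw [hval, hc0] at this
        rcases hu with h | h | h <;> rw [h] at this <;> exact absurd this (by decide)
      · intro e
        have := congrArg Fin.val e
        rw [hval] at this
        rcases hu with h | h | h <;> rw [h] at this <;> exact absurd this (by decide)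
    -- pull the witnesses back to A
    have hP : ∀ u : Fin n, u.val = 2 ∨ u.val = 3 ∨ u.val = 4 →
        (φ.symm u).val = 3 ∨ (φ.symm u).val = 5 := by
      intro u hu
      obtain ⟨hb1, hb2⟩ := PB u hu
      have heq : φ (mkOp tA (φ.symm u) (φ.symm c1)) = mkOp tB u c1 := by
        have := hφ (φ.symm u) (φ.symm c1)
        rwa [Equiv.apply_symm_apply, Equiv.apply_symm_apply] at this
      apply keyA (φ.symm u) (φ.symm c1)
      · intro e
        apply hb1
        rw [← heq, e, hz]
      · intro e
        apply hb2
        rw [← heq, e, Equiv.apply_symm_apply]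
    have collide : ∀ u v : Fin n, u.val ≠ v.val →
        (φ.symm u).val = (φ.symm v).val → False := by
      intro u v huv h
      exact huv (congrArg Fin.val (φ.symm.injective (Fin.ext h)))
    have q2 := hP c2 (Or.inl hc2)
    have q3 := hP c3 (Or.inr (Or.inl hc3))
    have q4 := hP c4 (Or.inr (Or.inr hc4))
    have n23 : c2.val ≠ c3.val := by rw [hc2, hc3]; omega
    have n24 : c2.val ≠ c4.val := by rw [hc2, hc4]; omega
    have n34 : c3.val ≠ c4.val := by rw [hc3, hc4]; omega
    rcases q2 with v2 | v2 <;> rcases q3 with v3 | v3 <;> rcases q4 with v4 | v4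
    · exact collide c2 c3 n23 (v2.trans v3.symm)
    · exact collide c2 c3 n23 (v2.trans v3.symm)
    · exact collide c2 c4 n24 (v2.trans v4.symm)
    · exact collide c3 c4 n34 (v3.trans v4.symm)
    · exact collide c3 c4 n34 (v3.trans v4.symm)
    · exact collide c2 c4 n24 (v2.trans v4.symm)
    · exact collide c2 c3 n23 (v2.trans v3.symm)
    · exact collide c2 c3 n23 (v2.trans v3.symm)
  · -- non-prolongable sequences in A, starting from (3, 5)
    refine ⟨c3, c5, ?_⟩
    intro h
    rw [opa, za] at h
    have a0 : (bckPair (mkOp tA) c3 c5 0).1 = c3 := rfl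
    have b0 : (bckPair (mkOp tA) c3 c5 0).2 = c5 := rfl
    have a1 : (bckPair (mkOp tA) c3 c5 1).1 = c1 := by
      show mkOp tA c5 (mkOp tA c5 c3) = c1
      apply Fin.ext
      rw [mkOp_val goodA hn, mkOp_val goodA hn, hc5, hc3, hc1]
      decide
    have b1 : (bckPair (mkOp tA) c3 c5 1).2 = c2 := by
      show mkOp tA c3 (mkOp tA c3 c5) = c2
      apply Fin.ext
      rw [mkOp_val goodA hn, mkOp_val goodA hn, hc5, hc3, hc2]
      decide
    have a2 : (bckPair (mkOp tA) c3 c5 2).1 = c1 := by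
      rw [show (2 : ℕ) = 0 + 2 from rfl, bckPair_fst, show (0 : ℕ) + 1 = 1 from rfl,
        a0, a1]
      apply Fin.ext
      rw [mkOp_val goodA hn, mkOp_val goodA hn, hc3, hc1]
      decide
    have b2 : (bckPair (mkOp tA) c3 c5 2).2 = c1 := by
      rw [show (2 : ℕ) = 0 + 2 from rfl, bckPair_snd, show (0 : ℕ) + 1 = 1 from rfl,
        b0, b1]
      apply Fin.ext
      rw [mkOp_val goodA hn, mkOp_val goodA hn, hc5, hc2, hc1]
      decide
    have a3 : (bckPair (mkOp tA) c3 c5 3).1 = c1 := by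
      rw [show (3 : ℕ) = 1 + 2 from rfl, bckPair_fst, show (1 : ℕ) + 1 = 2 from rfl,
        a1, a2]
      apply Fin.ext
      rw [mkOp_val goodA hn, mkOp_val goodA hn, hc1]
      decide
    have b3 : (bckPair (mkOp tA) c3 c5 3).2 = c0 := by
      rw [show (3 : ℕ) = 1 + 2 from rfl, bckPair_snd, show (1 : ℕ) + 1 = 2 from rfl,
        b1, b2]
      apply Fin.ext
      rw [mkOp_val goodA hn, mkOp_val goodA hn, hc2, hc1, hc0]
      decide
    have a4 : (bckPair (mkOp tA) c3 c5 4).1 = c1 := by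
      rw [show (4 : ℕ) = 2 + 2 from rfl, bckPair_fst, show (2 : ℕ) + 1 = 3 from rfl,
        a2, a3]
      apply Fin.ext
      rw [mkOp_val goodA hn, mkOp_val goodA hn, hc1]
      decide
    have h3 := (h 3).1
    rw [show (3 : ℕ) + 1 = 4 from rfl, a4, b3] at h3
    have := congrArg Fin.val h3
    rw [mkOp_val goodA hn, hc1, hc0] at this
    exact absurd this (by decide)
  · -- non-prolongable sequences in B, starting from (4, 5)
    refine ⟨c4, c5, ?_⟩
    intro h
    rw [opb, zb] at h
    have a0 : (bckPair (mkOp tB) c4 c5 0).1 = c4 := rfl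
    have b0 : (bckPair (mkOp tB) c4 c5 0).2 = c5 := rfl
    have a1 : (bckPair (mkOp tB) c4 c5 1).1 = c3 := by
      show mkOp tB c5 (mkOp tB c5 c4) = c3
      apply Fin.ext
      rw [mkOp_val goodB hn, mkOp_val goodB hn, hc5, hc4, hc3]
      decide
    have b1 : (bckPair (mkOp tB) c4 c5 1).2 = c2 := by
      show mkOp tB c4 (mkOp tB c4 c5) = c2
      apply Fin.ext
      rw [mkOp_val goodB hn, mkOp_val goodB hn, hc5, hc4, hc2]
      decide
    have a2 : (bckPair (mkOp tB) c4 c5 2).1 = c2 := by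
      rw [show (2 : ℕ) = 0 + 2 from rfl, bckPair_fst, show (0 : ℕ) + 1 = 1 from rfl,
        a0, a1]
      apply Fin.ext
      rw [mkOp_val goodB hn, mkOp_val goodB hn, hc4, hc3, hc2]
      decide
    have b2 : (bckPair (mkOp tB) c4 c5 2).2 = c2 := by
      rw [show (2 : ℕ) = 0 + 2 from rfl, bckPair_snd, show (0 : ℕ) + 1 = 1 from rfl,
        b0, b1]
      apply Fin.ext
      rw [mkOp_val goodB hn, mkOp_val goodB hn, hc5, hc2]
      decide
    have a3 : (bckPair (mkOp tB) c4 c5 3).1 = c1 := by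
      rw [show (3 : ℕ) = 1 + 2 from rfl, bckPair_fst, show (1 : ℕ) + 1 = 2 from rfl,
        a1, a2]
      apply Fin.ext
      rw [mkOp_val goodB hn, mkOp_val goodB hn, hc3, hc2, hc1]
      decide
    have b3 : (bckPair (mkOp tB) c4 c5 3).2 = c2 := by
      rw [show (3 : ℕ) = 1 + 2 from rfl, bckPair_snd, show (1 : ℕ) + 1 = 2 from rfl,
        b1, b2]
      apply Fin.ext
      rw [mkOp_val goodB hn, mkOp_val goodB hn, hc2]
      decide
    have b4 : (bckPair (mkOp tB) c4 c5 4).2 = c2 := by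
      rw [show (4 : ℕ) = 2 + 2 from rfl, bckPair_snd, show (2 : ℕ) + 1 = 3 from rfl,
        b2, b3]
      apply Fin.ext
      rw [mkOp_val goodB hn, mkOp_val goodB hn, hc2]
      decide
    have h3 := (h 3).2
    rw [show (3 : ℕ) + 1 = 4 from rfl, b4, a3] at h3
    have := congrArg Fin.val h3
    rw [mkOp_val goodB hn, hc2, hc1, hc0] at this
    exact absurd this (by decide)
end

section
/- In the BCK-algebra A given by Table 1, the BCK-sequences starting from x = 4 and y = 5 satisfy x_1 = 3, x_2 = 2, x_k = 1 for all k ≥ 3, y_1 = 2, and y_k = 2 for all k ≥ 2; in particular y_4 · x_3 = 1 ≠ 0, so these BCK-sequences cannot be prolonged. -/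
/-- The operation of Table 1 on `A = {0,1,2,3,4,5}`. -/
def tableA : Fin 6 → Fin 6 → Fin 6 :=
  ![![0,0,0,0,0,0],
    ![1,0,0,0,0,0],
    ![2,1,0,0,0,0],
    ![3,1,1,0,0,0],
    ![4,2,1,1,0,1],
    ![5,3,2,1,1,0]]

lemma bck_stable : ∀ k : ℕ, bckPair tableA 4 5 (k + 3) = (1, 2) ∧
    bckPair tableA 4 5 (k + 4) = (1, 2) := by
  intro k
  induction k with
  | zero => constructor <;> decide
  | succ n ih =>
    refine ⟨ih.2, ?_⟩
    show bckPair tableA 4 5 (n + 3 + 2) = (1, 2)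
    rw [show bckPair tableA 4 5 (n + 3 + 2) =
      (tableA (bckPair tableA 4 5 (n+3)).1 (tableA (bckPair tableA 4 5 (n+3)).1 (bckPair tableA 4 5 (n + 4)).1),
       tableA (bckPair tableA 4 5 (n+3)).2 (tableA (bckPair tableA 4 5 (n+3)).2 (bckPair tableA 4 5 (n + 4)).2)) from rfl,
      ih.1, ih.2]
    decide

/-- In the BCK-algebra `A` given by Table 1, the BCK-sequences starting from
`x = 4` and `y = 5` satisfy `x_1 = 3`, `x_2 = 2`, `x_k = 1` for all `k ≥ 3`,
`y_1 = 2`, and `y_k = 2` for all `k ≥ 2`; in particular `y_4 · x_3 = 1 ≠ 0`,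
so these BCK-sequences cannot be prolonged. -/
theorem tableA_sequences_cannot_be_prolonged :
    (bckPair tableA 4 5 1).1 = 3 ∧
    (bckPair tableA 4 5 2).1 = 2 ∧
    (∀ k : ℕ, 3 ≤ k → (bckPair tableA 4 5 k).1 = 1) ∧
    (bckPair tableA 4 5 1).2 = 2 ∧
    (∀ k : ℕ, 2 ≤ k → (bckPair tableA 4 5 k).2 = 2) ∧
    tableA (bckPair tableA 4 5 4).2 (bckPair tableA 4 5 3).1 = 1 ∧
    (1 : Fin 6) ≠ 0 ∧
    ¬ (∀ k : ℕ, tableA (bckPair tableA 4 5 (k + 1)).1 (bckPair tableA 4 5 k).2 = 0 ∧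
        tableA (bckPair tableA 4 5 (k + 1)).2 (bckPair tableA 4 5 k).1 = 0) := by
  have hx : ∀ k : ℕ, 3 ≤ k → (bckPair tableA 4 5 k).1 = 1 := by
    intro k hk
    obtain ⟨m, rfl⟩ := Nat.exists_eq_add_of_le hk
    rw [Nat.add_comm, (bck_stable m).1]
  have hy : ∀ k : ℕ, 2 ≤ k → (bckPair tableA 4 5 k).2 = 2 := by
    intro k hk
    rcases Nat.lt_or_ge k 3 with h | h
    · interval_cases k; decide
    · obtain ⟨m, rfl⟩ := Nat.exists_eq_add_of_le h
      rw [Nat.add_comm, (bck_stable m).1]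
  have h3 : bckPair tableA 4 5 3 = (1, 2) := (bck_stable 0).1
  have h4 : bckPair tableA 4 5 4 = (1, 2) := (bck_stable 0).2
  refine ⟨by decide, by decide, hx, by decide, hy, ?_, by decide, ?_⟩
  · rw [h3, h4]; decide
  · intro h
    have := (h 3).2
    rw [show (3:ℕ)+1 = 4 from rfl, h3, h4] at this
    exact absurd this (by decide)
end

section
/- For every n ≥ 5, the set X'_n = {0, 1, …, n} with the operation · defined by: x·y = x*y for x, y ≤ n−1 (where * is the operation of X_n); n·0 = n; n·y = n−y−1 for 1 ≤ y ≤ n−2; n·(n−1) = 1; x·n = 0 for every x ≠ n−1 (in particular n·n = 0); and (n−1)·n = 1, is a BCK-algebra of order n+1. Its BCK-order is the natural order on {0, 1, …, n−2} together with two incomparable maximal elements n−1 and n lying above n−2. -/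
/-- The operation of the linearly ordered BCK-algebra `X_n` written on natural
numbers: `x*y = 0` if `x ≤ y`, `x*0 = x`, `x*y = 1` if `x = y+1`, and
`x*y = x−y−1` if `x > y+1` and `y ≥ 1`. -/
def natStar (x y : ℕ) : ℕ :=
  if x ≤ y then 0 else if y = 0 then x else if x = y + 1 then 1 else x - y - 1

/-- The operation of `X'_n = {0, 1, …, n}` written on natural numbers:
`x·y = x*y` for `x, y ≤ n−1`; `n·0 = n`; `n·y = n−y−1` for `1 ≤ y ≤ n−2`;
`n·(n−1) = 1`; `x·n = 0` for every `x ≠ n−1` (in particular `n·n = 0`);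
and `(n−1)·n = 1`. -/
def primeVal (n x y : ℕ) : ℕ :=
  if y = n then (if x = n - 1 then 1 else 0)
  else if x = n then (if y = 0 then n else if y = n - 1 then 1 else n - y - 1)
  else natStar x y

theorem natStar_le (x y : ℕ) : natStar x y ≤ x := by
  unfold natStar; split_ifs <;> omega

theorem primeVal_lt {n x y : ℕ} (hn : 1 ≤ n) (hx : x < n + 1) (hy : y < n + 1) :
    primeVal n x y < n + 1 := by
  have h := natStar_le x y
  unfold primeVal; split_ifs <;> omega

/-- The BCK-algebra operation of `X'_n = {0, 1, …, n}` (for `n ≥ 5`),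
as an operation on `Fin (n+1)`. -/
def primeOp {n : ℕ} (hn : 5 ≤ n) (x y : Fin (n + 1)) : Fin (n + 1) :=
  ⟨primeVal n x y, primeVal_lt (by omega) x.isLt y.isLt⟩

lemma pv_spec (n x y : ℕ) (hn : 5 ≤ n) :
    (y = n ∧ x = n - 1 ∧ primeVal n x y = 1) ∨
    (y = n ∧ x ≠ n - 1 ∧ primeVal n x y = 0) ∨
    (y ≠ n ∧ x ≤ y ∧ primeVal n x y = 0) ∨
    (y ≠ n ∧ y = 0 ∧ y < x ∧ primeVal n x y = x) ∨
    (y ≠ n ∧ 1 ≤ y ∧ x = y + 1 ∧ primeVal n x y = 1) ∨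
    (y ≠ n ∧ 1 ≤ y ∧ y + 1 < x ∧ primeVal n x y = x - y - 1) := by
  unfold primeVal natStar; split_ifs <;> omega

lemma pv_ax1 (n x y z : ℕ) (hn : 5 ≤ n) (hx : x ≤ n) (hy : y ≤ n) (hz : z ≤ n) :
    primeVal n (primeVal n (primeVal n x y) (primeVal n z y)) (primeVal n x z) = 0 := by
  have h1 := pv_spec n x y hn
  have h2 := pv_spec n z y hn
  have h3 := pv_spec n x z hn
  have h4 := pv_spec n (primeVal n x y) (primeVal n z y) hn
  have h5 := pv_spec n (primeVal n (primeVal n x y) (primeVal n z y)) (primeVal n x z) hn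
  omega

lemma pv_ax2 (n x y : ℕ) (hn : 5 ≤ n) (hx : x ≤ n) (hy : y ≤ n) :
    primeVal n (primeVal n x (primeVal n x y)) y = 0 := by
  have h1 := pv_spec n x y hn
  have h2 := pv_spec n x (primeVal n x y) hn
  have h3 := pv_spec n (primeVal n x (primeVal n x y)) y hn
  omega

lemma primeOp_val {n : ℕ} (hn : 5 ≤ n) (x y : Fin (n + 1)) :
    (primeOp hn x y : ℕ) = primeVal n x y := rfl

lemma fin_zero_val (n : ℕ) : ((0 : Fin (n + 1)) : ℕ) = 0 := rfl

/-- For every `n ≥ 5`, the set `X'_n = {0, 1, …, n}` with the operation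
`primeOp` is a BCK-algebra of order `n+1`.  Its BCK-order is the natural
order on `{0, 1, …, n−2}` together with two incomparable maximal elements
`n−1` and `n` lying above `n−2`. -/
theorem primeOp_isBCK (n : ℕ) (hn : 5 ≤ n) :
    Fintype.card (Fin (n + 1)) = n + 1 ∧
    (∀ x y z : Fin (n + 1),
      primeOp hn (primeOp hn (primeOp hn x y) (primeOp hn z y)) (primeOp hn x z) = 0) ∧
    (∀ x y : Fin (n + 1), primeOp hn (primeOp hn x (primeOp hn x y)) y = 0) ∧
    (∀ x : Fin (n + 1), primeOp hn x 0 = x) ∧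
    (∀ x : Fin (n + 1), primeOp hn 0 x = 0) ∧
    (∀ x y : Fin (n + 1), primeOp hn x y = 0 → primeOp hn y x = 0 → x = y) ∧
    (∀ x y : Fin (n + 1), (x : ℕ) ≤ n - 2 → (y : ℕ) ≤ n - 2 →
      (primeOp hn x y = 0 ↔ (x : ℕ) ≤ (y : ℕ))) ∧
    (primeOp hn ⟨n - 1, by omega⟩ ⟨n, by omega⟩ ≠ 0) ∧
    (primeOp hn ⟨n, by omega⟩ ⟨n - 1, by omega⟩ ≠ 0) ∧
    (primeOp hn ⟨n - 2, by omega⟩ ⟨n - 1, by omega⟩ = 0) ∧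
    (primeOp hn ⟨n - 2, by omega⟩ ⟨n, by omega⟩ = 0) ∧
    (∀ x : Fin (n + 1), primeOp hn ⟨n - 1, by omega⟩ x = 0 → x = ⟨n - 1, by omega⟩) ∧
    (∀ x : Fin (n + 1), primeOp hn ⟨n, by omega⟩ x = 0 → x = ⟨n, by omega⟩) := by
  have key : ∀ x y : Fin (n + 1), primeOp hn x y = 0 ↔ primeVal n (x : ℕ) (y : ℕ) = 0 := by
    intro x y
    rw [Fin.ext_iff, primeOp_val, fin_zero_val]
  refine ⟨by simp, ?_, ?_, ?_, ?_, ?_, ?_, ?_, ?_, ?_, ?_, ?_, ?_⟩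
  · intro x y z
    rw [key]
    exact pv_ax1 n x y z hn (by omega) (by omega) (by omega)
  · intro x y
    rw [key]
    exact pv_ax2 n x y hn (by omega) (by omega)
  · intro x
    rw [Fin.ext_iff, primeOp_val, fin_zero_val]
    have := pv_spec n x 0 hn
    omega
  · intro x
    rw [Fin.ext_iff, primeOp_val, fin_zero_val]
    have := pv_spec n 0 x hn
    omega
  · intro x y h1 h2
    rw [key] at h1 h2
    rw [Fin.ext_iff]
    have s1 := pv_spec n x y hn
    have s2 := pv_spec n y x hn
    have := x.isLt; have := y.isLt
    omega
  · intro x y hx hy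
    rw [key]
    have := pv_spec n x y hn
    omega
  · rw [Ne, key]
    have := pv_spec n (n - 1) n hn
    simp only [Fin.val_mk]
    omega
  · rw [Ne, key]
    have := pv_spec n n (n - 1) hn
    simp only [Fin.val_mk]
    omega
  · rw [key]
    have := pv_spec n (n - 2) (n - 1) hn
    simp only [Fin.val_mk]
    omega
  · rw [key]
    have := pv_spec n (n - 2) n hn
    simp only [Fin.val_mk]
    omega
  · intro x h
    rw [key] at h
    rw [Fin.ext_iff]
    have := pv_spec n (n - 1) x hn
    have := x.isLt
    simp only [Fin.val_mk] at *
    omega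
  · intro x h
    rw [key] at h
    rw [Fin.ext_iff]
    have := pv_spec n n x hn
    have := x.isLt
    simp only [Fin.val_mk] at *
    omega
end

section
/- In the BCK-algebra X'_n (n ≥ 5), for all x, y ∈ X'_n, if x ≤ y in the BCK-order then n·y ≤ n·x. -/
theorem primeVal_top (n a : ℕ) (hn : 5 ≤ n) :
    primeVal n n a = if a = n then 0 else if a = 0 then n else if a = n - 1 then 1
      else n - a - 1 := by
  unfold primeVal
  split_ifs <;> omega

theorem primeVal_top_antitone (n a b : ℕ) (hn : 5 ≤ n) (ha : a ≤ n) (hb : b ≤ n)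
    (h : primeVal n a b = 0) :
    primeVal n (primeVal n n b) (primeVal n n a) = 0 := by
  have hab : (b = n ∧ a ≠ n - 1) ∨ (a ≤ b ∧ b ≠ n) := by
    unfold primeVal natStar at h
    split_ifs at h <;> omega
  set u := primeVal n n b with hu
  set v := primeVal n n a with hv
  have key : (v = n ∧ u ≠ n - 1) ∨ (v ≠ n ∧ u ≠ n ∧ u ≤ v) := by
    rw [hu, hv, primeVal_top n a hn, primeVal_top n b hn]
    split_ifs <;> omega
  clear_value u v
  unfold primeVal natStar
  split_ifs <;> omega

/-- In the BCK-algebra `X'_n` (`n ≥ 5`), for all `x, y ∈ X'_n`, if `x ≤ y` in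
the BCK-order then `n·y ≤ n·x`. -/
theorem primeOp_top_antitone (n : ℕ) (hn : 5 ≤ n) (x y : Fin (n + 1))
    (h : primeOp hn x y = 0) :
    primeOp hn (primeOp hn ⟨n, by omega⟩ y) (primeOp hn ⟨n, by omega⟩ x) = 0 := by
  have hh : primeVal n x y = 0 := congrArg Fin.val h
  exact Fin.ext (primeVal_top_antitone n x y hn (by omega) (by omega) hh)
end
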